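/- arXiv:2003.13946 — 2 statements merged into one kernel-verified Lean document; each statement's English description precedes it below -/
import Mathlib

section
/- Let α ∈ ℝ^d be rationally independent, ρ ∈ ℝ with 2ρ ≠ ⟨k,α⟩ mod ℤ for all k ∈ ℤ^d, and let D = diag(e^{2πiρ}, e^{-2πiρ}). If T : 𝕋^d → M₂(ℂ) is continuous and satisfies T(x+α) D = D T(x) for all x, then T(x) is a constant diagonal matrix. -/
open scoped Real
open Complex Matrix MeasureTheory Submodule Set ContinuousMap

noncomputable section

variable {d : ℕ}

/-- The `d`-torus as a product of unit additive circles. -/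
abbrev Td (d : ℕ) := Fin d → AddCircle (1:ℝ)

/-- The character of the torus with frequency `k`. -/
def tchar (k : Fin d → ℤ) : C(Td d, ℂ) :=
  ⟨fun y => ∏ i, fourier (k i) (y i),
    continuous_finset_prod _ fun i _ =>
      (map_continuous (fourier (k i))).comp (continuous_apply i)⟩

lemma tchar_apply (k : Fin d → ℤ) (y : Td d) : tchar k y = ∏ i, fourier (k i) (y i) := rfl

lemma fourier_add_arg {T : ℝ} (n : ℤ) (x y : AddCircle T) :
    fourier n (x + y) = fourier n x * fourier n y := by
  simp only [fourier_apply, smul_add, AddCircle.toCircle_add, Circle.coe_mul]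

lemma tchar_add (k : Fin d → ℤ) (x a : Td d) :
    tchar k (x + a) = tchar k x * tchar k a := by
  simp only [tchar_apply, Pi.add_apply, fourier_add_arg, Finset.prod_mul_distrib]

lemma tchar_zero_freq : tchar (0 : Fin d → ℤ) = 1 := by
  ext y
  simp [tchar_apply, fourier_zero]

lemma tchar_mul (k l : Fin d → ℤ) : tchar k * tchar l = tchar (k + l) := by
  ext y
  simp [tchar_apply, ← Finset.prod_mul_distrib, ← fourier_add]

lemma tchar_star (k : Fin d → ℤ) : star (tchar k) = tchar (-k) := by
  ext y
  simp only [ContinuousMap.star_apply, tchar_apply, Pi.neg_apply, star_prod]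
  exact Finset.prod_congr rfl fun i _ => by
    rw [fourier_neg, starRingEnd_apply]

/-- The star subalgebra generated by the characters. -/
def tcharAlg (d : ℕ) : StarSubalgebra ℂ C(Td d, ℂ) where
  toSubalgebra := Algebra.adjoin ℂ (range (tchar (d := d)))
  star_mem' := by
    intro x hx
    show star x ∈ Algebra.adjoin ℂ (range (tchar (d := d)))
    have : Algebra.adjoin ℂ (range (tchar (d := d))) ≤
        star (Algebra.adjoin ℂ (range (tchar (d := d)))) := by
      refine Algebra.adjoin_le ?_
      rintro - ⟨k, rfl⟩
      refine Set.mem_star.mpr ?_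
      show star (tchar k) ∈ _
      rw [tchar_star]
      exact Algebra.subset_adjoin ⟨-k, rfl⟩
    simpa using this hx

lemma tcharAlg_coe :
    Subalgebra.toSubmodule (tcharAlg d).toSubalgebra = span ℂ (range (tchar (d := d))) := by
  apply Algebra.adjoin_eq_span_of_subset
  refine Subset.trans ?_ Submodule.subset_span
  intro x hx
  refine Submonoid.closure_induction (fun _ => id) ⟨0, tchar_zero_freq⟩ ?_ hx
  rintro - - - - ⟨m, rfl⟩ ⟨n, rfl⟩
  exact ⟨m + n, (tchar_mul m n).symm⟩

lemma tcharAlg_separatesPoints : (tcharAlg d).SeparatesPoints := by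
  intro x y hxy
  obtain ⟨i, hi⟩ : ∃ i, x i ≠ y i := by
    by_contra h
    push_neg at h
    exact hxy (funext h)
  refine ⟨_, ⟨tchar (Pi.single i 1), Algebra.subset_adjoin ⟨_, rfl⟩, rfl⟩, ?_⟩
  have key : ∀ z : Td d, tchar (Pi.single i 1) z = AddCircle.toCircle (z i) := by
    intro z
    rw [tchar_apply]
    rw [Finset.prod_eq_single_of_mem i (Finset.mem_univ _)]
    · rw [Pi.single_eq_same, fourier_one]
    · intro j _ hj
      rw [Pi.single_eq_of_ne hj, fourier_zero]
  dsimp only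
  rw [key, key]
  intro h
  rw [Circle.coe_inj] at h
  exact hi (AddCircle.injective_toCircle one_ne_zero h)

lemma span_tchar_closure_eq_top :
    (span ℂ (range (tchar (d := d)))).topologicalClosure = ⊤ := by
  rw [← tcharAlg_coe]
  exact congr_arg (Subalgebra.toSubmodule <| StarSubalgebra.toSubalgebra ·)
    (ContinuousMap.starSubalgebra_topologicalClosure_eq_top_of_separatesPoints _
      tcharAlg_separatesPoints)

instance : IsProbabilityMeasure (volume : Measure (AddCircle (1:ℝ))) :=
  ⟨by rw [AddCircle.measure_univ]; norm_num⟩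

lemma td_integrable (f : C(Td d, ℂ)) : Integrable (fun y => f y) (volume : Measure (Td d)) :=
  f.continuous.integrable_of_hasCompactSupport (HasCompactSupport.of_compactSpace _)

/-- Integration against `F` as a continuous linear functional on `C(Td d, ℂ)`. -/
def pairL (F : C(Td d, ℂ)) : C(Td d, ℂ) →L[ℂ] ℂ :=
  LinearMap.mkContinuous
    { toFun := fun g => ∫ y, F y * g y
      map_add' := fun g h => by
        simp_rw [ContinuousMap.add_apply, mul_add]
        exact integral_add ((td_integrable (F * g)).congr (by filter_upwards with y; rfl))
          ((td_integrable (F * h)).congr (by filter_upwards with y; rfl))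
      map_smul' := fun c g => by
        simp_rw [ContinuousMap.smul_apply, smul_eq_mul, RingHom.id_apply, ← integral_const_mul]
        congr 1; ext y; ring }
    ‖F‖
    (by
      intro g
      simp only [LinearMap.coe_mk, AddHom.coe_mk]
      calc ‖∫ y, F y * g y‖
          ≤ (‖F‖ * ‖g‖) * (volume (univ : Set (Td d))).toReal := by
            refine norm_integral_le_of_norm_le_const (Filter.Eventually.of_forall fun y ↦ ?_)
            rw [norm_mul]
            exact mul_le_mul (F.norm_coe_le_norm y) (g.norm_coe_le_norm y)
              (norm_nonneg _) (norm_nonneg _)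
        _ = ‖F‖ * ‖g‖ := by simp [measure_univ])

lemma pairL_apply (F g : C(Td d, ℂ)) : pairL F g = ∫ y, F y * g y := rfl

/-- A continuous function on the torus whose pairings with all characters vanish is zero. -/
lemma ext_zero (F : C(Td d, ℂ)) (h : ∀ k, ∫ y, F y * tchar k y = 0) : F = 0 := by
  have hker : (span ℂ (range (tchar (d := d)))) ≤ LinearMap.ker (pairL F : C(Td d, ℂ) →ₗ[ℂ] ℂ) := by
    rw [span_le]
    rintro - ⟨k, rfl⟩
    exact LinearMap.mem_ker.mpr (h k)
  have hclosed : IsClosed ((LinearMap.ker (pairL F : C(Td d, ℂ) →ₗ[ℂ] ℂ) : Submodule ℂ C(Td d, ℂ)) : Set C(Td d, ℂ)) :=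
    ContinuousLinearMap.isClosed_ker (pairL F)
  have htop : (LinearMap.ker (pairL F : C(Td d, ℂ) →ₗ[ℂ] ℂ) : Submodule ℂ C(Td d, ℂ)) = ⊤ := by
    rw [← top_le_iff, ← span_tchar_closure_eq_top]
    exact Submodule.topologicalClosure_minimal _ hker hclosed
  have hFF : pairL F (star F) = 0 := by
    have : star F ∈ (⊤ : Submodule ℂ C(Td d, ℂ)) := Submodule.mem_top
    rw [← htop] at this
    exact this
  rw [pairL_apply] at hFF
  have hsq : (∫ y, (Complex.normSq (F y) : ℝ)) = 0 := by
    have : ∀ y, F y * (star F) y = ((Complex.normSq (F y) : ℝ) : ℂ) := fun y => by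
      simp [ContinuousMap.star_apply, Complex.mul_conj, RCLike.star_def]
    have h2 : (∫ y, ((Complex.normSq (F y) : ℝ) : ℂ)) = 0 := by
      simp_rw [← this]; exact hFF
    have h3 := integral_ofReal (𝕜 := ℂ) (f := fun y => Complex.normSq (F y))
      (μ := (volume : Measure (Td d)))
    rw [show (fun y => ((Complex.normSq (F y) : ℝ) : ℂ)) = (fun y => (RCLike.ofReal (K := ℂ) (Complex.normSq (F y)))) from rfl] at h2
    rw [h3] at h2
    exact RCLike.ofReal_eq_zero.mp h2
  have hint : Integrable (fun y => (Complex.normSq (F y) : ℝ)) (volume : Measure (Td d)) := by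
    refine Continuous.integrable_of_hasCompactSupport ?_ (HasCompactSupport.of_compactSpace _)
    exact Complex.continuous_normSq.comp F.continuous
  have hae : (fun y => (Complex.normSq (F y) : ℝ)) =ᵐ[volume] 0 := by
    refine (integral_eq_zero_iff_of_nonneg ?_ hint).mp hsq
    exact fun y => Complex.normSq_nonneg _
  have heq : (fun y => (Complex.normSq (F y) : ℝ)) = 0 :=
    (Continuous.ae_eq_iff_eq volume (Complex.continuous_normSq.comp F.continuous)
      continuous_const).mp hae
  ext y
  have := congrFun heq y
  simpa [Complex.normSq_eq_zero] using this

lemma tchar_single_val (k : Fin d → ℤ) (i : Fin d) (b : AddCircle (1:ℝ)) :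
    tchar k (Pi.single i b) = fourier (k i) b := by
  rw [tchar_apply, Finset.prod_eq_single_of_mem i (Finset.mem_univ _)]
  · rw [Pi.single_eq_same]
  · intro j _ hj
    rw [Pi.single_eq_of_ne hj, fourier_eval_zero]

lemma coeff_zero (F : C(Td d, ℂ)) (a : Td d) (c : ℂ) (hF : ∀ y, F (y + a) = c * F y)
    (k : Fin d → ℤ) (hk : tchar k a * c ≠ 1) : ∫ y, F y * tchar k y = 0 := by
  have inv : ∫ y, F (y + a) * tchar k (y + a) = ∫ y, F y * tchar k y :=
    integral_add_right_eq_self (μ := (volume : Measure (Td d)))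
      (fun y => F y * tchar k y) a
  have : ∫ y, F (y + a) * tchar k (y + a) = (tchar k a * c) * ∫ y, F y * tchar k y := by
    rw [← integral_const_mul]
    congr 1
    ext y
    rw [hF y, tchar_add]
    ring
  rw [this] at inv
  by_contra hI
  exact hk (mul_right_cancel₀ hI (by rw [one_mul]; exact inv))

lemma integral_tchar (k : Fin d → ℤ) (hk : k ≠ 0) : ∫ y, tchar k y = 0 := by
  obtain ⟨i, hi⟩ : ∃ i, k i ≠ 0 := by
    by_contra h
    push_neg at h
    exact hk (funext h)
  set a : Td d := Pi.single i ((1 / 2 / (k i) : ℝ) : AddCircle (1:ℝ)) with ha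
  have hval : tchar k a = -1 := by
    rw [ha, tchar_single_val, fourier_coe_apply]
    have hki : ((k i : ℂ)) ≠ 0 := Int.cast_ne_zero.mpr hi
    rw [show (2 * ↑π * I * ↑(k i) * ↑((1:ℝ) / 2 / (k i)) / (1:ℝ) : ℂ) = ↑π * I by
      push_cast; field_simp]
    exact Complex.exp_pi_mul_I
  have := coeff_zero (1 : C(Td d, ℂ)) a 1 (fun y => by simp) k
    (by rw [hval]; norm_num)
  simpa using this

lemma torus_vanish (F : C(Td d, ℂ)) (a : Td d) (c : ℂ) (hF : ∀ y, F (y + a) = c * F y)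
    (hc : ∀ k : Fin d → ℤ, tchar k a * c ≠ 1) : F = 0 :=
  ext_zero F fun k => coeff_zero F a c hF k (hc k)

lemma torus_const (F : C(Td d, ℂ)) (a : Td d) (hF : ∀ y, F (y + a) = F y)
    (hc : ∀ k : Fin d → ℤ, k ≠ 0 → tchar k a ≠ 1) :
    ∀ y, F y = ∫ z, F z := by
  set m := ∫ z, F z with hm
  have key : F - ContinuousMap.const (Td d) m = 0 := by
    apply ext_zero
    intro k
    have hsplit : ∫ y, (F - ContinuousMap.const (Td d) m) y * tchar k y
        = (∫ y, F y * tchar k y) - m * ∫ y, tchar k y := by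
      rw [← integral_const_mul, ← integral_sub]
      · congr 1
        ext y
        simp only [ContinuousMap.sub_apply, ContinuousMap.const_apply]
        ring
      · exact (td_integrable (F * tchar k)).congr (by filter_upwards with y; rfl)
      · exact (td_integrable ((m : ℂ) • tchar k)).congr (by filter_upwards with y; simp)
    rw [hsplit]
    by_cases hk : k = 0
    · subst hk
      rw [tchar_zero_freq]
      simp only [ContinuousMap.one_apply, mul_one]
      rw [integral_const]
      simp [measure_univ, ← hm]
    · rw [coeff_zero F a 1 (fun y => by rw [hF y, one_mul]) k (by rw [mul_one]; exact hc k hk),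
        integral_tchar k hk]
      ring
  intro y
  have := congrFun (congrArg DFunLike.coe key) y
  simp only [ContinuousMap.sub_apply, ContinuousMap.const_apply, ContinuousMap.zero_apply] at this
  linear_combination this

/-- Projection from `ℝ^d` to the torus. -/
def qmap (d : ℕ) : (Fin d → ℝ) → Td d := fun x i => (x i : AddCircle (1:ℝ))

lemma qmap_openQuotient : IsOpenQuotientMap (qmap d) :=
  IsOpenQuotientMap.piMap fun _ => QuotientAddGroup.isOpenQuotientMap_mk

lemma qmap_add (x y : Fin d → ℝ) : qmap d (x + y) = qmap d x + qmap d y := rfl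

/-- Lift a periodic continuous function to the torus. -/
lemma descend (f : (Fin d → ℝ) → ℂ) (hf : Continuous f)
    (hper : ∀ (x : Fin d → ℝ) (m : Fin d → ℤ), f (x + fun i => (m i : ℝ)) = f x) :
    ∃ F : C(Td d, ℂ), ∀ x, F (qmap d x) = f x := by
  have hfib : ∀ x y, qmap d x = qmap d y → f x = f y := by
    intro x y hxy
    have h1 : ∀ i, ∃ n : ℤ, n • (1:ℝ) = x i - y i := by
      intro i
      have : (x i : AddCircle (1:ℝ)) = y i := congrFun hxy i
      have := (QuotientAddGroup.eq_iff_sub_mem).mp this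
      exact AddSubgroup.mem_zmultiples_iff.mp this
    choose m hm using h1
    have hx : x = y + fun i => (m i : ℝ) := by
      funext i
      have := hm i
      simp only [zsmul_eq_mul, mul_one] at this
      rw [Pi.add_apply, this]
      ring
    rw [hx, hper]
  set F0 : Td d → ℂ := Function.extend (qmap d) f 0 with hF0
  have hcomp : ∀ x, F0 (qmap d x) = f x := by
    intro x
    classical
    have hex : ∃ a, qmap d a = qmap d x := ⟨x, rfl⟩
    rw [hF0, Function.extend_def]
    rw [dif_pos hex]
    exact hfib _ _ hex.choose_spec

  have hcont : Continuous F0 := by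
    rw [(qmap_openQuotient.isQuotientMap).continuous_iff]
    have : F0 ∘ qmap d = f := funext hcomp
    rw [this]
    exact hf
  exact ⟨⟨F0, hcont⟩, hcomp⟩

lemma tchar_qmap (k : Fin d → ℤ) (α : Fin d → ℝ) :
    tchar k (qmap d α) = Complex.exp (2 * ↑π * I * (↑(∑ i, (k i : ℝ) * α i))) := by
  rw [tchar_apply]
  have : ∀ i, fourier (k i) ((α i : AddCircle (1:ℝ)))
      = Complex.exp (2 * ↑π * I * ((((k i : ℝ) * α i : ℝ)) : ℂ)) := by
    intro i
    rw [fourier_coe_apply]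
    push_cast
    ring_nf
  simp_rw [qmap]
  rw [Finset.prod_congr rfl fun i _ => this i, ← Complex.exp_sum]
  congr 1
  rw [← Finset.mul_sum]
  push_cast
  ring

lemma real_vanish (α : Fin d → ℝ) (f : (Fin d → ℝ) → ℂ) (hf : Continuous f)
    (hper : ∀ (x : Fin d → ℝ) (m : Fin d → ℤ), f (x + fun i => (m i : ℝ)) = f x)
    (c : ℂ) (heqv : ∀ x, f (x + α) = c * f x)
    (hc : ∀ k : Fin d → ℤ,
      Complex.exp (2 * ↑π * I * (↑(∑ i, (k i : ℝ) * α i))) * c ≠ 1) :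
    ∀ x, f x = 0 := by
  obtain ⟨F, hF⟩ := descend f hf hper
  have hFa : ∀ y, F (y + qmap d α) = c * F y := by
    intro y
    obtain ⟨x, rfl⟩ := qmap_openQuotient.surjective y
    rw [← qmap_add, hF, hF, heqv]
  have hzero : F = 0 := torus_vanish F (qmap d α) c hFa (by
    intro k
    rw [tchar_qmap]
    exact hc k)
  intro x
  rw [← hF x, hzero]
  rfl

lemma real_const (α : Fin d → ℝ) (f : (Fin d → ℝ) → ℂ) (hf : Continuous f)
    (hper : ∀ (x : Fin d → ℝ) (m : Fin d → ℤ), f (x + fun i => (m i : ℝ)) = f x)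
    (heqv : ∀ x, f (x + α) = f x)
    (hc : ∀ k : Fin d → ℤ, k ≠ 0 →
      Complex.exp (2 * ↑π * I * (↑(∑ i, (k i : ℝ) * α i))) ≠ 1) :
    ∀ x, f x = f 0 := by
  obtain ⟨F, hF⟩ := descend f hf hper
  have hFa : ∀ y, F (y + qmap d α) = F y := by
    intro y
    obtain ⟨x, rfl⟩ := qmap_openQuotient.surjective y
    rw [← qmap_add, hF, hF, heqv]
  have hcst := torus_const F (qmap d α) hFa (by
    intro k hk
    rw [tchar_qmap]
    exact hc k hk)
  intro x
  have h0 : qmap d (0 : Fin d → ℝ) = 0 := rfl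
  rw [← hF x, ← hF 0, hcst (qmap d x), hcst (qmap d 0)]

lemma exp_two_pi_ne_one (s : ℝ) (h : ∀ j : ℤ, s ≠ j) :
    Complex.exp (2 * ↑π * I * (s : ℂ)) ≠ 1 := by
  rw [Ne, Complex.exp_eq_one_iff]
  rintro ⟨n, hn⟩
  apply h n
  have h2 : (2 * ↑π * I : ℂ) ≠ 0 :=
    mul_ne_zero (mul_ne_zero two_ne_zero (Complex.ofReal_ne_zero.mpr Real.pi_ne_zero))
      Complex.I_ne_zero
  have hs : (s : ℂ) = (n : ℂ) := by
    have h3 : (s : ℂ) * (2 * ↑π * I) = (n : ℂ) * (2 * ↑π * I) := by linear_combination hn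
    exact mul_right_cancel₀ h2 h3
  exact_mod_cast hs

end

/-- if `T : 𝕋^d → M₂(ℂ)` is continuous and satisfies
`T(x+α) D = D T(x)` where `D = diag(e^{2πiρ}, e^{-2πiρ})` with
`2ρ ≠ ⟨k,α⟩ mod ℤ` for all `k`, then `T` is a constant diagonal matrix. -/
theorem stmt2 {d : ℕ} (α : Fin d → ℝ) (ρ : ℝ)
    (hα : ∀ k : Fin d → ℤ, k ≠ 0 → ∀ j : ℤ, (∑ i, (k i : ℝ) * α i) ≠ j)
    (hρ : ∀ (k : Fin d → ℤ) (j : ℤ), 2 * ρ ≠ (∑ i, (k i : ℝ) * α i) + j)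
    (D : Matrix (Fin 2) (Fin 2) ℂ)
    (hD : D = Matrix.diagonal ![Complex.exp (2 * π * I * ρ),
                                Complex.exp (-(2 * π * I * ρ))])
    (T : (Fin d → ℝ) → Matrix (Fin 2) (Fin 2) ℂ)
    (hT : Continuous T)
    (hper : ∀ (x : Fin d → ℝ) (m : Fin d → ℤ), T (x + fun i => (m i : ℝ)) = T x)
    (heq : ∀ x, T (x + α) * D = D * T x) :
    ∃ a b : ℂ, ∀ x, T x = Matrix.diagonal ![a, b] := by
  subst hD
  set v : Fin 2 → ℂ := ![Complex.exp (2 * π * I * ρ), Complex.exp (-(2 * π * I * ρ))] with hv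
  have hent : ∀ x (i j : Fin 2), T (x + α) i j * v j = v i * T x i j := by
    intro x i j
    have h := congrFun (congrFun (heq x) i) j
    rwa [Matrix.mul_diagonal, Matrix.diagonal_mul] at h
  have hv0 : v 0 = Complex.exp (2 * π * I * ρ) := rfl
  have hv1 : v 1 = Complex.exp (-(2 * π * I * ρ)) := rfl
  have hvne : ∀ i, v i ≠ 0 := by
    intro i
    fin_cases i
    · exact Complex.exp_ne_zero _
    · exact Complex.exp_ne_zero _
  have hcont : ∀ i j : Fin 2, Continuous fun x => T x i j := fun i j => hT.matrix_elem i j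
  have hperE : ∀ (i j : Fin 2) (x : Fin d → ℝ) (m : Fin d → ℤ),
      (fun y => T y i j) (x + fun i => (m i : ℝ)) = T x i j := by
    intro i j x m
    simp only
    rw [hper]
  -- diagonal entries are constant
  have hdiag : ∀ i : Fin 2, ∀ x, T x i i = T 0 i i := by
    intro i
    refine real_const α (fun x => T x i i) (hcont i i) (hperE i i) ?_ ?_
    · intro x
      have h := hent x i i
      rw [mul_comm (v i) (T x i i)] at h
      exact mul_right_cancel₀ (hvne i) h
    · intro k hk
      exact exp_two_pi_ne_one _ (hα k hk)
  -- off-diagonal entries vanish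
  have hoff01 : ∀ x, T x 0 1 = 0 := by
    refine real_vanish α (fun x => T x 0 1) (hcont 0 1) (hperE 0 1) (v 0 * (v 1)⁻¹) ?_ ?_
    · intro x
      have h := hent x 0 1
      calc T (x + α) 0 1 = T (x + α) 0 1 * v 1 * (v 1)⁻¹ :=
            (mul_inv_cancel_right₀ (hvne 1) _).symm
        _ = (v 0 * T x 0 1) * (v 1)⁻¹ := by rw [h]
        _ = v 0 * (v 1)⁻¹ * T x 0 1 := by ring
    · intro k
      have hc01 : v 0 * (v 1)⁻¹ = Complex.exp (2 * ↑π * I * ↑ρ + 2 * ↑π * I * ↑ρ) := by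
        rw [hv0, hv1, ← Complex.exp_neg, neg_neg, ← Complex.exp_add]
      rw [hc01, ← Complex.exp_add]
      rw [show (2 * ↑π * I * (↑(∑ i, (k i : ℝ) * α i)) + (2 * ↑π * I * ↑ρ + 2 * ↑π * I * ↑ρ) : ℂ)
          = 2 * ↑π * I * ((((∑ i, (k i : ℝ) * α i) + 2 * ρ : ℝ)) : ℂ) by push_cast; ring]
      refine exp_two_pi_ne_one _ ?_
      intro j h
      refine hρ (-k) j ?_
      rw [show (∑ i, ((-k) i : ℝ) * α i) = -∑ i, (k i : ℝ) * α i by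
        rw [← Finset.sum_neg_distrib]
        exact Finset.sum_congr rfl fun i _ => by simp only [Pi.neg_apply, Int.cast_neg]; ring]
      linarith
  have hoff10 : ∀ x, T x 1 0 = 0 := by
    refine real_vanish α (fun x => T x 1 0) (hcont 1 0) (hperE 1 0) (v 1 * (v 0)⁻¹) ?_ ?_
    · intro x
      have h := hent x 1 0
      calc T (x + α) 1 0 = T (x + α) 1 0 * v 0 * (v 0)⁻¹ :=
            (mul_inv_cancel_right₀ (hvne 0) _).symm
        _ = (v 1 * T x 1 0) * (v 0)⁻¹ := by rw [h]
        _ = v 1 * (v 0)⁻¹ * T x 1 0 := by ring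
    · intro k
      have hc10 : v 1 * (v 0)⁻¹ = Complex.exp (-(2 * ↑π * I * ↑ρ) + -(2 * ↑π * I * ↑ρ)) := by
        rw [hv0, hv1, ← Complex.exp_neg, ← Complex.exp_add]
      rw [hc10, ← Complex.exp_add]
      rw [show (2 * ↑π * I * (↑(∑ i, (k i : ℝ) * α i)) + (-(2 * ↑π * I * ↑ρ) + -(2 * ↑π * I * ↑ρ)) : ℂ)
          = 2 * ↑π * I * ((((∑ i, (k i : ℝ) * α i) - 2 * ρ : ℝ)) : ℂ) by push_cast; ring]
      refine exp_two_pi_ne_one _ ?_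
      intro j h
      refine hρ k (-j) ?_
      push_cast
      linarith
  refine ⟨T 0 0 0, T 0 1 1, fun x => ?_⟩
  ext i j
  fin_cases i <;> fin_cases j <;>
    simp [Matrix.diagonal_apply, hdiag 0 x, hdiag 1 x, hoff01 x, hoff10 x]
end

section
/- Let u : ℤ^d → ℂ be the sequence of Fourier coefficients (shifted by ℓ ∈ ℤ^d) of z ∈ L²(𝕋^d,ℂ), i.e., u(n) = ẑ(n), where z satisfies the twisted cohomological equation (E − V(x)) z(x) = e^{−2πiθ} z(x−α) + e^{2πiθ} z(x+α) almost everywhere on 𝕋^d, with V ∈ L²(𝕋^d,ℝ) having Fourier coefficients V̂_k. Then u satisfies the long-range eigenvalue equation Σ_{k∈ℤ^d} V̂_k u(n−k) + 2cos 2π(θ + ⟨n,α⟩) u(n) = E u(n) for all n ∈ ℤ^d, provided V has absolutely summable Fourier coefficients so that the convolution converges. -/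
open scoped Real
open Complex MeasureTheory
open scoped Pointwise ENNReal NNReal

/-- the unit box `[0,1]^d`, a fundamental domain of `𝕋^d` -/
def unitBox (d : ℕ) : Set (Fin d → ℝ) := Set.univ.pi fun _ => Set.Icc 0 1

namespace Stmt11Aux

variable {d : ℕ}

lemma measurableSet_unitBox : MeasurableSet (unitBox d) :=
  MeasurableSet.univ_pi fun _ => measurableSet_Icc

lemma volume_unitBox : (volume (unitBox d)) = 1 := by
  rw [unitBox, volume_pi_pi]
  simp [Real.volume_Icc]

noncomputable def bB (d : ℕ) : Module.Basis (Fin d) ℝ (Fin d → ℝ) := Pi.basisFun ℝ (Fin d)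

lemma fd_eq : ZSpan.fundamentalDomain (bB d) = Set.univ.pi fun _ => Set.Ico (0:ℝ) 1 := by
  ext x
  simp [ZSpan.fundamentalDomain, bB, Set.mem_pi]

lemma volume_fd : volume (ZSpan.fundamentalDomain (bB d)) = 1 := by
  rw [fd_eq, volume_pi_pi]
  simp [Real.volume_Ico]

lemma fd_subset : ZSpan.fundamentalDomain (bB d) ⊆ unitBox d := by
  rw [fd_eq]
  intro x hx i _
  exact Set.Ico_subset_Icc_self (hx i trivial)

lemma restrict_eq :
    (volume : Measure (Fin d → ℝ)).restrict (unitBox d)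
      = volume.restrict (ZSpan.fundamentalDomain (bB d)) := by
  apply Measure.restrict_congr_set
  rw [MeasureTheory.ae_eq_set]
  constructor
  · have h := measure_diff (μ := volume) fd_subset
      (ZSpan.fundamentalDomain_measurableSet (bB d)).nullMeasurableSet
      (by rw [volume_fd]; exact ENNReal.one_ne_top)
    rw [h, volume_unitBox, volume_fd, tsub_self]
  · rw [Set.diff_eq_empty.2 fd_subset]
    exact measure_empty

lemma coords_int (v : Fin d → ℝ)
    (hv : v ∈ Submodule.span ℤ (Set.range ⇑(bB d))) :
    ∃ m : Fin d → ℤ, v = fun i => (m i : ℝ) := by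
  induction hv using Submodule.span_induction with
  | mem x hx =>
      obtain ⟨i, rfl⟩ := hx
      refine ⟨Pi.single i 1, ?_⟩
      funext j
      simp [bB, Pi.single_apply]
  | zero => exact ⟨0, by funext i; simp⟩
  | add x y hx hy ihx ihy =>
      obtain ⟨m, rfl⟩ := ihx
      obtain ⟨m', rfl⟩ := ihy
      exact ⟨m + m', by funext i; simp⟩
  | smul a x hx ih =>
      obtain ⟨m, rfl⟩ := ih
      refine ⟨fun i => a * m i, ?_⟩
      funext i
      simp [zsmul_eq_mul]

lemma translate_key (F : (Fin d → ℝ) → ℂ)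
    (hper : ∀ (x : Fin d → ℝ) (m : Fin d → ℤ), F (x + fun i => (m i : ℝ)) = F x)
    (c : Fin d → ℝ) (hint : IntegrableOn F (unitBox d)) :
    IntegrableOn (fun x => F (x + c)) (unitBox d) ∧
      (∫ x in unitBox d, F (x + c)) = ∫ x in unitBox d, F x := by
  classical
  set D := ZSpan.fundamentalDomain (bB d) with hDdef
  have hD := ZSpan.isAddFundamentalDomain (bB d) (volume : Measure (Fin d → ℝ))
  haveI : VAddCommClass (Fin d → ℝ) (Submodule.span ℤ (Set.range ⇑(bB d))) (Fin d → ℝ) :=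
    ⟨fun a g x => by change a + (↑g + x) = ↑g + (a + x); abel⟩
  haveI : MeasurableVAdd (↥(Submodule.span ℤ (Set.range ⇑(bB d)))) (Fin d → ℝ) := by
    refine { measurable_const_vadd := fun g => ?_, measurable_vadd_const := fun x => ?_ }
    · exact measurable_const_add (g : Fin d → ℝ)
    · exact (measurable_subtype_coe).add_const x
  haveI : VAddInvariantMeasure (↥(Submodule.span ℤ (Set.range ⇑(bB d)))) (Fin d → ℝ)
      volume := by
    refine ⟨fun g s hs => ?_⟩
    exact measure_preimage_add volume (g : Fin d → ℝ) s
  have hDc := hD.vadd_of_comm (g := c)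
  have hinv : ∀ (g : (Submodule.span ℤ (Set.range ⇑(bB d)))) (x : Fin d → ℝ),
      F (g +ᵥ x) = F x := by
    intro g x
    obtain ⟨m, hm⟩ := coords_int (g : Fin d → ℝ) g.2
    have h1 : g +ᵥ x = x + fun i => (m i : ℝ) := by
      show (g : Fin d → ℝ) + x = _
      rw [hm, add_comm]
    rw [h1, hper]
  have hpre : (fun x : Fin d → ℝ => x + c) ⁻¹' (c +ᵥ D) = D := by
    ext x
    rw [Set.mem_preimage, Set.mem_vadd_set_iff_neg_vadd_mem, vadd_eq_add]
    rw [show -c + (x + c) = x by abel]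
  have hmeasD : MeasurableSet D := ZSpan.fundamentalDomain_measurableSet (bB d)
  have hcd_eq : c +ᵥ D = (fun x : Fin d → ℝ => -c + x) ⁻¹' D := by
    ext x
    rw [Set.mem_vadd_set_iff_neg_vadd_mem, vadd_eq_add, Set.mem_preimage]
  have hmeas_cD : MeasurableSet (c +ᵥ D) := by
    rw [hcd_eq]
    exact hmeasD.preimage (measurable_const_add _)
  have hmp : MeasurePreserving (fun x : Fin d → ℝ => x + c) volume volume :=
    measurePreserving_add_right volume c
  have hemb : MeasurableEmbedding (fun x : Fin d → ℝ => x + c) :=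
    measurableEmbedding_addRight c
  -- map of restricted measure
  have hmap : volume.restrict (c +ᵥ D)
      = Measure.map (fun x : Fin d → ℝ => x + c) (volume.restrict D) := by
    conv_lhs => rw [← hmp.map_eq]
    rw [Measure.restrict_map hmp.measurable hmeas_cD, hpre]
  have hintD : IntegrableOn F D := by
    have : Integrable F (volume.restrict (unitBox d)) := hint
    rwa [restrict_eq] at this
  have hint_cD : IntegrableOn F (c +ᵥ D) := (hDc.integrableOn_iff hD hinv).2 hintD
  have hint_transD : IntegrableOn (fun x => F (x + c)) D := by
    have : Integrable F (volume.restrict (c +ᵥ D)) := hint_cD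
    rw [hmap, hemb.integrable_map_iff] at this
    exact this
  constructor
  · show Integrable _ (volume.restrict (unitBox d))
    rw [restrict_eq]
    exact hint_transD
  · have h1 : (∫ x in unitBox d, F (x + c)) = ∫ x in D, F (x + c) := by
      rw [show (∫ x in unitBox d, F (x + c)) = ∫ x, F (x + c) ∂(volume.restrict (unitBox d)) from rfl,
        restrict_eq]
    have h2 : (∫ x in D, F (x + c)) = ∫ y in c +ᵥ D, F y := by
      have := hmp.setIntegral_preimage_emb hemb F (c +ᵥ D)
      rwa [hpre] at this
    have h3 : (∫ y in c +ᵥ D, F y) = ∫ y in D, F y := hDc.setIntegral_eq hD hinv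
    have h4 : (∫ y in D, F y) = ∫ y in unitBox d, F y := by
      rw [show (∫ y in unitBox d, F y) = ∫ y, F y ∂(volume.restrict (unitBox d)) from rfl,
        restrict_eq]
    rw [h1, h2, h3, h4]


noncomputable def en {d : ℕ} (m : Fin d → ℤ) (x : Fin d → ℝ) : ℂ :=
  Complex.exp (-(2 * ↑π * I * ((∑ i, (m i : ℝ) * x i : ℝ) : ℂ)))

lemma measurable_en (m : Fin d → ℤ) : Measurable (en (d := d) m) := by
  unfold en
  fun_prop

lemma norm_en (m : Fin d → ℤ) (x : Fin d → ℝ) : ‖en m x‖ = 1 := by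
  unfold en
  rw [Complex.norm_exp]
  simp

lemma en_mul_exp (k n : Fin d → ℤ) (x : Fin d → ℝ) :
    Complex.exp (2 * ↑π * I * ((∑ i, (k i : ℝ) * x i : ℝ) : ℂ)) * en n x = en (n - k) x := by
  unfold en
  rw [← Complex.exp_add]
  congr 1
  have hs : (∑ i, ((n - k) i : ℝ) * x i)
      = (∑ i, (n i : ℝ) * x i) - ∑ i, (k i : ℝ) * x i := by
    rw [← Finset.sum_sub_distrib]
    refine Finset.sum_congr rfl fun i _ => ?_
    rw [Pi.sub_apply]
    push_cast
    ring
  rw [hs]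
  push_cast
  ring

lemma en_translate (m : Fin d → ℤ) (x c : Fin d → ℝ) :
    en m (x + c) = en m x * Complex.exp (-(2 * ↑π * I * ((∑ i, (m i : ℝ) * c i : ℝ) : ℂ))) := by
  unfold en
  rw [← Complex.exp_add]
  congr 1
  have hs : (∑ i, (m i : ℝ) * (x + c) i)
      = (∑ i, (m i : ℝ) * x i) + ∑ i, (m i : ℝ) * c i := by
    rw [← Finset.sum_add_distrib]
    refine Finset.sum_congr rfl fun i _ => ?_
    rw [Pi.add_apply]
    ring
  rw [hs]
  push_cast
  ring

lemma en_per (m : Fin d → ℤ) (x : Fin d → ℝ) (p : Fin d → ℤ) :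
    en m (x + fun i => (p i : ℝ)) = en m x := by
  rw [en_translate]
  have hs : ((∑ i, (m i : ℝ) * (p i : ℝ) : ℝ) : ℂ) = ((∑ i, m i * p i : ℤ) : ℂ) := by
    push_cast
    ring
  rw [hs, show -(2 * ↑π * I * ((∑ i, m i * p i : ℤ) : ℂ))
      = ((-(∑ i, m i * p i) : ℤ) : ℂ) * (2 * ↑π * I) by push_cast; ring,
    Complex.exp_int_mul_two_pi_mul_I, mul_one]

lemma aesm_tsum {α : Type*} [MeasurableSpace α] {μ : Measure α}
    {ι : Type*} [Countable ι] {f : ι → α → ℂ}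
    (hm : ∀ i, AEStronglyMeasurable (f i) μ)
    (hs : ∀ x, Summable fun i => f i x) :
    AEStronglyMeasurable (fun x => ∑' i, f i x) μ := by
  refine aestronglyMeasurable_of_tendsto_ae (Filter.atTop : Filter (Finset ι))
    (fun s => Finset.aestronglyMeasurable_sum s fun i _ => hm i) ?_
  exact Filter.Eventually.of_forall fun x => by simpa only [Finset.sum_apply, HasSum, SummationFilter.unconditional_filter] using (hs x).hasSum

end Stmt11Aux

/-- Aubry duality computation.  If `z ∈ L²(𝕋^d)` satisfies the
twisted cohomological equation
`(E − V(x)) z(x) = e^{−2πiθ} z(x−α) + e^{2πiθ} z(x+α)` a.e., where `V` has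
absolutely summable Fourier coefficients `V̂`, then the Fourier coefficients
`u(n) = ẑ(n)` of `z` satisfy the long-range eigenvalue equation
`Σ_k V̂_k u(n−k) + 2cos 2π(θ+⟨n,α⟩) u(n) = E u(n)`. -/
theorem stmt11 {d : ℕ} (α : Fin d → ℝ) (θ E : ℝ)
    (Vhat : (Fin d → ℤ) → ℂ) (hVhat : Summable fun k => ‖Vhat k‖)
    (V : (Fin d → ℝ) → ℝ)
    (hV : ∀ x, (V x : ℂ) = ∑' k : Fin d → ℤ,
      Vhat k * Complex.exp (2 * π * I * (∑ i, (k i : ℝ) * x i)))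
    (z : (Fin d → ℝ) → ℂ)
    (hz : MeasureTheory.MemLp z 2 (volume.restrict (unitBox d)))
    (hzper : ∀ (x : Fin d → ℝ) (m : Fin d → ℤ), z (x + fun i => (m i : ℝ)) = z x)
    (heq : ∀ᵐ x ∂(volume.restrict (unitBox d)),
      ((E : ℂ) - V x) * z x
        = Complex.exp (-(2 * π * I * θ)) * z (x - α)
          + Complex.exp (2 * π * I * θ) * z (x + α))
    (u : (Fin d → ℤ) → ℂ)
    (hu : ∀ n, u n = ∫ x in unitBox d,
      z x * Complex.exp (-(2 * π * I * (∑ i, (n i : ℝ) * x i)))) :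
    ∀ n : Fin d → ℤ,
      (∑' k : Fin d → ℤ, Vhat k * u (n - k))
        + 2 * Real.cos (2 * π * (θ + ∑ i, (n i : ℝ) * α i)) * u n
      = E * u n := by
  intro n
  classical
  haveI : IsFiniteMeasure (volume.restrict (unitBox d)) := by
    constructor
    rw [Measure.restrict_apply_univ, Stmt11Aux.volume_unitBox]
    exact ENNReal.one_lt_top
  have hzm : AEStronglyMeasurable z (volume.restrict (unitBox d)) := hz.1
  have hzint : Integrable z (volume.restrict (unitBox d)) := hz.integrable one_le_two
  have hu' : ∀ m, u m = ∫ x in unitBox d, z x * Stmt11Aux.en m x := hu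
  have hFint : ∀ m : Fin d → ℤ, Integrable (fun x => z x * Stmt11Aux.en m x)
      (volume.restrict (unitBox d)) := by
    intro m
    refine hzint.norm.mono' (hzm.mul (Stmt11Aux.measurable_en m).aestronglyMeasurable)
      (Filter.Eventually.of_forall fun x => ?_)
    rw [norm_mul, Stmt11Aux.norm_en, mul_one]
  have hnormf : ∀ (k : Fin d → ℤ) (x : Fin d → ℝ),
      ‖Vhat k * (z x * Stmt11Aux.en (n - k) x)‖ = ‖Vhat k‖ * ‖z x‖ := by
    intro k x
    rw [norm_mul, norm_mul, Stmt11Aux.norm_en, mul_one]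
  have hsumf : ∀ x, Summable fun k : Fin d → ℤ => Vhat k * (z x * Stmt11Aux.en (n - k) x) := by
    intro x
    exact Summable.of_norm ((hVhat.mul_right ‖z x‖).congr fun k => (hnormf k x).symm)
  have hfm : ∀ k : Fin d → ℤ,
      AEStronglyMeasurable (fun x => Vhat k * (z x * Stmt11Aux.en (n - k) x))
        (volume.restrict (unitBox d)) := fun k =>
    (hzm.mul (Stmt11Aux.measurable_en (n - k)).aestronglyMeasurable).const_mul _
  have htsum_m := Stmt11Aux.aesm_tsum hfm hsumf
  have hbound : ∀ x, ‖∑' k : Fin d → ℤ, Vhat k * (z x * Stmt11Aux.en (n - k) x)‖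
      ≤ (∑' k, ‖Vhat k‖) * ‖z x‖ := by
    intro x
    have h1 : Summable fun k : Fin d → ℤ => ‖Vhat k * (z x * Stmt11Aux.en (n - k) x)‖ :=
      (hVhat.mul_right ‖z x‖).congr fun k => (hnormf k x).symm
    refine (norm_tsum_le_tsum_norm h1).trans (le_of_eq ?_)
    rw [tsum_congr fun k => hnormf k x, tsum_mul_right]
  have htsum_int : Integrable
      (fun x => ∑' k : Fin d → ℤ, Vhat k * (z x * Stmt11Aux.en (n - k) x))
      (volume.restrict (unitBox d)) :=
    (hzint.norm.const_mul _).mono' htsum_m (Filter.Eventually.of_forall hbound)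
  have hVz : ∀ x, (V x : ℂ) * (z x * Stmt11Aux.en n x)
      = ∑' k : Fin d → ℤ, Vhat k * (z x * Stmt11Aux.en (n - k) x) := by
    intro x
    rw [hV x, ← tsum_mul_right]
    refine tsum_congr fun k => ?_
    rw [show Vhat k * Complex.exp (2 * ↑π * I * ((∑ i, (k i : ℝ) * x i : ℝ) : ℂ))
          * (z x * Stmt11Aux.en n x)
        = Vhat k * (z x * (Complex.exp (2 * ↑π * I * ((∑ i, (k i : ℝ) * x i : ℝ) : ℂ))
          * Stmt11Aux.en n x)) by ring,
      Stmt11Aux.en_mul_exp]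
  have hVzint : Integrable (fun x => (V x : ℂ) * (z x * Stmt11Aux.en n x))
      (volume.restrict (unitBox d)) :=
    htsum_int.congr (Filter.Eventually.of_forall fun x => (hVz x).symm)
  have hen1 : ∀ (m : Fin d → ℤ) (x : Fin d → ℝ), ‖Stmt11Aux.en m x‖₊ = 1 := by
    intro m x
    rw [← NNReal.coe_inj, coe_nnnorm, Stmt11Aux.norm_en, NNReal.coe_one]
  have hlib : (∑' k : Fin d → ℤ,
      ∫⁻ x, ‖Vhat k * (z x * Stmt11Aux.en (n - k) x)‖₊ ∂(volume.restrict (unitBox d))) ≠ ⊤ := by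
    have hnn : ∀ (k : Fin d → ℤ) (x : Fin d → ℝ),
        (‖Vhat k * (z x * Stmt11Aux.en (n - k) x)‖₊ : ℝ≥0∞)
          = (‖Vhat k‖₊ : ℝ≥0∞) * (‖z x‖₊ : ℝ≥0∞) := by
      intro k x
      rw [nnnorm_mul, nnnorm_mul, hen1, mul_one, ENNReal.coe_mul]
    have h2 : ∀ k : Fin d → ℤ,
        ∫⁻ x, ‖Vhat k * (z x * Stmt11Aux.en (n - k) x)‖₊ ∂(volume.restrict (unitBox d))
          = (‖Vhat k‖₊ : ℝ≥0∞) * ∫⁻ x, ‖z x‖₊ ∂(volume.restrict (unitBox d)) := by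
      intro k
      rw [← lintegral_const_mul' _ _ ENNReal.coe_ne_top]
      exact lintegral_congr fun x => hnn k x
    rw [tsum_congr h2, ENNReal.tsum_mul_right]
    refine ENNReal.mul_ne_top ?_ hzint.2.ne
    exact ENNReal.tsum_coe_ne_top_iff_summable.2
      (NNReal.summable_coe.1 (by simpa only [coe_nnnorm] using hVhat))
  have hswap : ∫ x in unitBox d, (∑' k : Fin d → ℤ, Vhat k * (z x * Stmt11Aux.en (n - k) x))
      = ∑' k : Fin d → ℤ, ∫ x in unitBox d, Vhat k * (z x * Stmt11Aux.en (n - k) x) :=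
    integral_tsum hfm hlib
  have hconv : ∫ x in unitBox d, (V x : ℂ) * (z x * Stmt11Aux.en n x)
      = ∑' k : Fin d → ℤ, Vhat k * u (n - k) := by
    rw [integral_congr_ae (Filter.Eventually.of_forall hVz), hswap]
    refine tsum_congr fun k => ?_
    rw [integral_const_mul, ← hu' (n - k)]
  have hkey : ∫ x in unitBox d, (((E : ℂ) - V x) * z x) * Stmt11Aux.en n x
      = ∫ x in unitBox d,
        (Complex.exp (-(2 * π * I * θ)) * z (x - α)
          + Complex.exp (2 * π * I * θ) * z (x + α)) * Stmt11Aux.en n x :=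
    integral_congr_ae (heq.mono fun x hx => congrArg (fun w => w * Stmt11Aux.en n x) hx)
  have hL : ∫ x in unitBox d, (((E : ℂ) - V x) * z x) * Stmt11Aux.en n x
      = (E : ℂ) * u n - ∑' k : Fin d → ℤ, Vhat k * u (n - k) := by
    have h1 : ∀ x, (((E : ℂ) - V x) * z x) * Stmt11Aux.en n x
        = (E : ℂ) * (z x * Stmt11Aux.en n x) - (V x : ℂ) * (z x * Stmt11Aux.en n x) :=
      fun x => by ring
    rw [integral_congr_ae (Filter.Eventually.of_forall h1),
      integral_sub ((hFint n).const_mul _) hVzint, integral_const_mul, ← hu' n, hconv]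
  have hGper : ∀ (x : Fin d → ℝ) (p : Fin d → ℤ),
      (fun y => z y * Stmt11Aux.en n y) (x + fun i => (p i : ℝ))
        = (fun y => z y * Stmt11Aux.en n y) x := by
    intro x p
    simp only
    rw [hzper, Stmt11Aux.en_per]
  have hGint : IntegrableOn (fun y => z y * Stmt11Aux.en n y) (unitBox d) := hFint n
  have key2 : ∀ c : Fin d → ℝ,
      Integrable (fun x => z (x + c) * Stmt11Aux.en n x) (volume.restrict (unitBox d)) ∧
        ∫ x in unitBox d, z (x + c) * Stmt11Aux.en n x
          = Complex.exp (2 * ↑π * I * ((∑ i, (n i : ℝ) * c i : ℝ) : ℂ)) * u n := by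
    intro c
    obtain ⟨hti, hte⟩ := Stmt11Aux.translate_key _ hGper c hGint
    have hptw : ∀ x, z (x + c) * Stmt11Aux.en n x
        = (fun y => z y * Stmt11Aux.en n y) (x + c)
          * Complex.exp (2 * ↑π * I * ((∑ i, (n i : ℝ) * c i : ℝ) : ℂ)) := by
      intro x
      simp only
      rw [Stmt11Aux.en_translate,
        show z (x + c) * (Stmt11Aux.en n x
            * Complex.exp (-(2 * ↑π * I * ((∑ i, (n i : ℝ) * c i : ℝ) : ℂ))))
          * Complex.exp (2 * ↑π * I * ((∑ i, (n i : ℝ) * c i : ℝ) : ℂ))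
        = z (x + c) * Stmt11Aux.en n x
          * (Complex.exp (-(2 * ↑π * I * ((∑ i, (n i : ℝ) * c i : ℝ) : ℂ)))
            * Complex.exp (2 * ↑π * I * ((∑ i, (n i : ℝ) * c i : ℝ) : ℂ))) by ring,
        ← Complex.exp_add,
        show -(2 * ↑π * I * ((∑ i, (n i : ℝ) * c i : ℝ) : ℂ))
            + 2 * ↑π * I * ((∑ i, (n i : ℝ) * c i : ℝ) : ℂ) = 0 by ring,
        Complex.exp_zero, mul_one]
    constructor
    · exact (hti.mul_const _).congr (Filter.Eventually.of_forall fun x => (hptw x).symm)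
    · rw [integral_congr_ae (Filter.Eventually.of_forall hptw), integral_mul_const, hte,
        ← hu' n]
      ring
  have hR : ∫ x in unitBox d,
      (Complex.exp (-(2 * π * I * θ)) * z (x - α)
        + Complex.exp (2 * π * I * θ) * z (x + α)) * Stmt11Aux.en n x
      = 2 * (Real.cos (2 * π * (θ + ∑ i, (n i : ℝ) * α i)) : ℂ) * u n := by
    have h1 : ∀ x, (Complex.exp (-(2 * π * I * θ)) * z (x - α)
          + Complex.exp (2 * π * I * θ) * z (x + α)) * Stmt11Aux.en n x
        = Complex.exp (-(2 * π * I * θ)) * (z (x + -α) * Stmt11Aux.en n x)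
          + Complex.exp (2 * π * I * θ) * (z (x + α) * Stmt11Aux.en n x) := by
      intro x
      rw [show x - α = x + -α from sub_eq_add_neg x α]
      ring
    rw [integral_congr_ae (Filter.Eventually.of_forall h1),
      integral_add ((key2 (-α)).1.const_mul _) ((key2 α).1.const_mul _),
      integral_const_mul, integral_const_mul, (key2 (-α)).2, (key2 α).2]
    have hsn : ((∑ i, (n i : ℝ) * (-α) i : ℝ) : ℂ) = -((∑ i, (n i : ℝ) * α i : ℝ) : ℂ) := by
      rw [show (∑ i, (n i : ℝ) * (-α) i : ℝ) = -(∑ i, (n i : ℝ) * α i : ℝ) by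
          simp [mul_neg], Complex.ofReal_neg]
    rw [hsn]
    have hcos : Complex.exp (-(2 * ↑π * I * ↑θ))
          * Complex.exp (2 * ↑π * I * -((∑ i, (n i : ℝ) * α i : ℝ) : ℂ))
        + Complex.exp (2 * ↑π * I * ↑θ)
          * Complex.exp (2 * ↑π * I * ((∑ i, (n i : ℝ) * α i : ℝ) : ℂ))
        = 2 * (Real.cos (2 * π * (θ + ∑ i, (n i : ℝ) * α i)) : ℂ) := by
      rw [← Complex.exp_add, ← Complex.exp_add, Complex.ofReal_cos, Complex.cos,
        show ((2 * π * (θ + ∑ i, (n i : ℝ) * α i) : ℝ) : ℂ) * I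
          = 2 * ↑π * I * ↑θ + 2 * ↑π * I * ((∑ i, (n i : ℝ) * α i : ℝ) : ℂ) by
            push_cast; ring,
        show -(((2 * π * (θ + ∑ i, (n i : ℝ) * α i) : ℝ) : ℂ)) * I
          = -(2 * ↑π * I * ↑θ) + 2 * ↑π * I * -((∑ i, (n i : ℝ) * α i : ℝ) : ℂ) by
            push_cast; ring]
      ring
    linear_combination u n * hcos
  have hfinal := hL.symm.trans (hkey.trans hR)
  linear_combination -hfinal
end
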